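/- Let β > 0. There exists a constant C > 0 depending only on β such that the following holds. Let ζ > 0, N > 0 and 0 ≤ ε with εβ < 2. Let b : [0,1] → ℝ be continuous with b(0) = 0 and write b*_1 = sup_{0≤s≤1} |b(s)|. Let f ∈ L²([0,1];ℝ) with ‖f‖_{L²([0,1])} ≤ N, set h(t) = ∫₀^t f(s) ds, let g : [0,1] → ℝ be continuous and nonnegative, and let ξ : [0,1] → ℝ be continuous and positive such that for every t ∈ [0,1], ξ(t)^{1+β} = e^{-(1+β)(2-εβ)t/2 + (1+β)h(t) + √ε(1+β)b(t)} ζ^{1+β} + (1+β) ∫₀^t e^{-(1+β)(2-εβ)(t-s)/2 + (1+β)(h(t)-h(s)) + √ε(1+β)(b(t)-b(s))} g(s) ds. Then sup_{0≤t≤1} ξ(t) ≤ C ( e^{N + √ε b*_1} ζ + e^{N + 2√ε b*_1} ( sup_{0≤t≤1} g(t) )^{1/(1+β)} ). -/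

import Mathlib

open MeasureTheory Set Real

lemma rpow_add_le_add_rpow' (x y p : ℝ) (hx : 0 ≤ x) (hy : 0 ≤ y) (hp : 0 ≤ p) (hp1 : p ≤ 1) :
    (x + y) ^ p ≤ x ^ p + y ^ p := by
  lift x to NNReal using hx
  lift y to NNReal using hy
  exact_mod_cast NNReal.rpow_add_le_add_rpow x y hp hp1

lemma cs_interval {f : ℝ → ℝ} {s t : ℝ} (hst : s ≤ t)
    (hf : IntervalIntegrable f volume s t)
    (hf2 : IntervalIntegrable (fun x => f x ^ 2) volume s t) :
    |∫ x in s..t, f x| ≤ Real.sqrt (t - s) * Real.sqrt (∫ x in s..t, f x ^ 2) := by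
  haveI : IsFiniteMeasure (volume.restrict (Ioc s t)) :=
    ⟨by rw [Measure.restrict_apply_univ]; exact measure_Ioc_lt_top⟩
  have h1 : |∫ x in s..t, f x| ≤ ∫ x in s..t, |f x| :=
    intervalIntegral.abs_integral_le_integral_abs hst
  have h2 : (∫ x in s..t, |f x|) = ∫ x, |f x| ∂(volume.restrict (Ioc s t)) :=
    intervalIntegral.integral_of_le hst
  have hfm : AEStronglyMeasurable (fun x => |f x|) (volume.restrict (Ioc s t)) := by
    simpa [Real.norm_eq_abs] using hf.1.aestronglyMeasurable.norm
  have hsq : Integrable (fun x => |f x| ^ 2) (volume.restrict (Ioc s t)) := by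
    simp only [sq_abs]; exact hf2.1
  have hmem : MemLp (fun x => |f x|) 2 (volume.restrict (Ioc s t)) :=
    (memLp_two_iff_integrable_sq hfm).mpr hsq
  have hone : MemLp (fun _ : ℝ => (1:ℝ)) 2 (volume.restrict (Ioc s t)) := memLp_const 1
  have hpq : Real.HolderConjugate 2 2 := Real.HolderConjugate.two_two
  have key := integral_mul_le_Lp_mul_Lq_of_nonneg (μ := volume.restrict (Ioc s t)) hpq
    (f := fun x => |f x|) (g := fun _ => (1:ℝ))
    (ae_of_all _ fun x => abs_nonneg _) (ae_of_all _ fun _ => zero_le_one)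
    (by simpa using hmem) (by simpa using hone)
  have e1 : (∫ x, (fun x => |f x|) x * (fun _ => (1:ℝ)) x ∂(volume.restrict (Ioc s t)))
      = ∫ x, |f x| ∂(volume.restrict (Ioc s t)) := by simp
  have e2 : (∫ x, (fun x => |f x|) x ^ (2:ℝ) ∂(volume.restrict (Ioc s t)))
      = ∫ x in s..t, f x ^ 2 := by
    rw [intervalIntegral.integral_of_le hst]
    congr 1; funext x
    rw [show ((2:ℝ) = ((2:ℕ):ℝ)) by norm_num, Real.rpow_natCast, sq_abs]
  have e3 : (∫ x, (fun _ => (1:ℝ)) x ^ (2:ℝ) ∂(volume.restrict (Ioc s t))) = t - s := by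
    simp [Real.one_rpow, Real.volume_Ioc, ENNReal.toReal_ofReal (sub_nonneg.2 hst), hst]
  rw [e1, e2, e3] at key
  calc |∫ x in s..t, f x| ≤ ∫ x in s..t, |f x| := h1
    _ = ∫ x, |f x| ∂(volume.restrict (Ioc s t)) := h2
    _ ≤ (∫ x in s..t, f x ^ 2) ^ (1/(2:ℝ)) * (t - s) ^ (1/(2:ℝ)) := key
    _ = Real.sqrt (t - s) * Real.sqrt (∫ x in s..t, f x ^ 2) := by
        rw [← Real.sqrt_eq_rpow, ← Real.sqrt_eq_rpow, mul_comm]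

/-- Pathwise form of inequality (4.26): supremum upper bound for the controlled
stochastic inhibitor. -/
theorem stmt_10 (β : ℝ) (hβ : 0 < β) :
    ∃ C > (0:ℝ), ∀ (ζ N ε : ℝ), 0 < ζ → 0 < N → 0 ≤ ε → ε * β < 2 →
      ∀ (b : ℝ → ℝ), ContinuousOn b (Icc 0 1) → b 0 = 0 →
      ∀ (f : ℝ → ℝ),
      IntervalIntegrable f volume 0 1 →
      IntervalIntegrable (fun s => f s ^ 2) volume 0 1 →
      Real.sqrt (∫ s in (0:ℝ)..1, f s ^ 2) ≤ N →
      ∀ (h : ℝ → ℝ), (∀ t, h t = ∫ s in (0:ℝ)..t, f s) →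
      ∀ (g ξ : ℝ → ℝ),
      ContinuousOn g (Icc 0 1) → (∀ t ∈ Icc (0:ℝ) 1, 0 ≤ g t) →
      ContinuousOn ξ (Icc 0 1) → (∀ t ∈ Icc (0:ℝ) 1, 0 < ξ t) →
      (∀ t ∈ Icc (0:ℝ) 1,
        ξ t ^ (1 + β) =
          Real.exp (-(1 + β) * (2 - ε * β) * t / 2 + (1 + β) * h t
              + Real.sqrt ε * (1 + β) * b t) * ζ ^ (1 + β)
          + (1 + β) * ∫ s in (0:ℝ)..t,
              Real.exp (-(1 + β) * (2 - ε * β) * (t - s) / 2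
                + (1 + β) * (h t - h s) + Real.sqrt ε * (1 + β) * (b t - b s)) * g s) →
      sSup (ξ '' Icc (0:ℝ) 1) ≤
        C * (Real.exp (N + Real.sqrt ε * sSup ((fun s => |b s|) '' Icc (0:ℝ) 1)) * ζ
          + Real.exp (N + 2 * Real.sqrt ε * sSup ((fun s => |b s|) '' Icc (0:ℝ) 1))
              * (sSup (g '' Icc (0:ℝ) 1)) ^ (1 / (1 + β))) := by
  have h1β : (0:ℝ) < 1 + β := by linarith
  refine ⟨1 + β, h1β, ?_⟩
  intro ζ N ε hζ hN hε hεβ b hbc hb0 f hfi hf2i hfN h hh g ξ hgc hg0 hξc hξpos hξeq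
  set M := sSup ((fun s => |b s|) '' Icc (0:ℝ) 1) with hMdef
  set G := sSup (g '' Icc (0:ℝ) 1) with hGdef
  have h01 : (0:ℝ) ∈ Icc (0:ℝ) 1 := by norm_num
  have hMbdd : BddAbove ((fun s => |b s|) '' Icc (0:ℝ) 1) :=
    (isCompact_Icc.image_of_continuousOn hbc.abs).bddAbove
  have hbM : ∀ t ∈ Icc (0:ℝ) 1, |b t| ≤ M := fun t ht => le_csSup hMbdd ⟨t, ht, rfl⟩
  have hM0 : 0 ≤ M := (abs_nonneg _).trans (hbM 0 h01)
  have hGbdd : BddAbove (g '' Icc (0:ℝ) 1) := (isCompact_Icc.image_of_continuousOn hgc).bddAbove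
  have hgG : ∀ t ∈ Icc (0:ℝ) 1, g t ≤ G := fun t ht => le_csSup hGbdd ⟨t, ht, rfl⟩
  have hG0 : 0 ≤ G := (hg0 0 h01).trans (hgG 0 h01)
  have hsε : 0 ≤ Real.sqrt ε := Real.sqrt_nonneg ε
  -- bound on increments of h
  have hhd : ∀ s t : ℝ, s ∈ Icc (0:ℝ) 1 → t ∈ Icc (0:ℝ) 1 → s ≤ t → h t - h s ≤ N := by
    intro s t hs ht hst
    have hsub : uIcc s t ⊆ uIcc (0:ℝ) 1 := by
      rw [uIcc_of_le hst, uIcc_of_le zero_le_one]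
      exact Icc_subset_Icc hs.1 ht.2
    have hfist : IntervalIntegrable f volume s t := hfi.mono_set hsub
    have hf2st : IntervalIntegrable (fun x => f x ^ 2) volume s t := hf2i.mono_set hsub
    have heq : h t - h s = ∫ x in s..t, f x := by
      rw [hh t, hh s]
      exact intervalIntegral.integral_interval_sub_left
        (hfi.mono_set (by rw [uIcc_of_le ht.1, uIcc_of_le zero_le_one]
                          exact Icc_subset_Icc le_rfl ht.2))
        (hfi.mono_set (by rw [uIcc_of_le hs.1, uIcc_of_le zero_le_one]
                          exact Icc_subset_Icc le_rfl hs.2))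
    rw [heq]
    calc (∫ x in s..t, f x) ≤ |∫ x in s..t, f x| := le_abs_self _
      _ ≤ Real.sqrt (t - s) * Real.sqrt (∫ x in s..t, f x ^ 2) := cs_interval hst hfist hf2st
      _ ≤ 1 * Real.sqrt (∫ x in (0:ℝ)..1, f x ^ 2) := by
          apply mul_le_mul
          · calc Real.sqrt (t - s) ≤ Real.sqrt 1 := Real.sqrt_le_sqrt (by linarith [hs.1, ht.2])
              _ = 1 := Real.sqrt_one
          · exact Real.sqrt_le_sqrt (intervalIntegral.integral_mono_interval hs.1 hst ht.2
              (ae_of_all _ fun x => sq_nonneg _) hf2i)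
          · exact Real.sqrt_nonneg _
          · norm_num
      _ ≤ N := by rw [one_mul]; exact hfN
  have hh0 : h 0 = 0 := by rw [hh 0, intervalIntegral.integral_same]
  have hhN : ∀ t ∈ Icc (0:ℝ) 1, h t ≤ N := by
    intro t ht
    have := hhd 0 t h01 ht ht.1
    linarith
  -- continuity of h
  have hhc : ContinuousOn h (Icc (0:ℝ) 1) := by
    have hc : ContinuousOn (fun t => ∫ x in (0:ℝ)..t, f x) (uIcc (0:ℝ) 1) :=
      intervalIntegral.continuousOn_primitive_interval' hfi left_mem_uIcc
    rw [uIcc_of_le zero_le_one] at hc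
    exact hc.congr fun t _ => hh t
  set A := Real.exp (N + Real.sqrt ε * M) * ζ with hAdef
  set E := Real.exp (N + 2 * Real.sqrt ε * M) with hEdef
  have hApos : 0 < A := mul_pos (Real.exp_pos _) hζ
  have hEpos : 0 < E := Real.exp_pos _
  have hp0 : 0 ≤ 1 / (1 + β) := by positivity
  have hp1 : 1 / (1 + β) ≤ 1 := by
    rw [div_le_one h1β]; linarith
  -- pointwise bound
  have hpt : ∀ t ∈ Icc (0:ℝ) 1, ξ t ≤ A + (1 + β) * (E * G ^ (1 / (1 + β))) := by
    intro t ht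
    have hsub01 : Icc (0:ℝ) t ⊆ Icc (0:ℝ) 1 := Icc_subset_Icc le_rfl ht.2
    -- first term
    have hT1 : Real.exp (-(1 + β) * (2 - ε * β) * t / 2 + (1 + β) * h t
        + Real.sqrt ε * (1 + β) * b t) * ζ ^ (1 + β) ≤ A ^ (1 + β) := by
      have hexp : -(1 + β) * (2 - ε * β) * t / 2 + (1 + β) * h t
          + Real.sqrt ε * (1 + β) * b t ≤ (1 + β) * (N + Real.sqrt ε * M) := by
        have e1 : 0 ≤ (1 + β) * (2 - ε * β) * t :=
          mul_nonneg (mul_nonneg h1β.le (by linarith)) ht.1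
        have e2 : (1 + β) * h t ≤ (1 + β) * N :=
          mul_le_mul_of_nonneg_left (hhN t ht) h1β.le
        have e3 : Real.sqrt ε * (1 + β) * b t ≤ Real.sqrt ε * (1 + β) * M :=
          mul_le_mul_of_nonneg_left ((le_abs_self _).trans (hbM t ht))
            (mul_nonneg hsε h1β.le)
        have : (1 + β) * (N + Real.sqrt ε * M)
            = (1 + β) * N + Real.sqrt ε * (1 + β) * M := by ring
        rw [this]; linarith
      calc Real.exp (-(1 + β) * (2 - ε * β) * t / 2 + (1 + β) * h t
            + Real.sqrt ε * (1 + β) * b t) * ζ ^ (1 + β)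
          ≤ Real.exp ((1 + β) * (N + Real.sqrt ε * M)) * ζ ^ (1 + β) :=
            mul_le_mul_of_nonneg_right (Real.exp_le_exp.2 hexp) (Real.rpow_nonneg hζ.le _)
        _ = A ^ (1 + β) := by
            rw [hAdef, Real.mul_rpow (Real.exp_pos _).le hζ.le,
              mul_comm (1 + β) (N + Real.sqrt ε * M), Real.exp_mul]
    -- integral term
    have hKle : ∀ s ∈ Icc (0:ℝ) t,
        Real.exp (-(1 + β) * (2 - ε * β) * (t - s) / 2 + (1 + β) * (h t - h s)
          + Real.sqrt ε * (1 + β) * (b t - b s)) * g s ≤ E ^ (1 + β) * G := by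
      intro s hs
      have hs01 : s ∈ Icc (0:ℝ) 1 := hsub01 hs
      have hexp : -(1 + β) * (2 - ε * β) * (t - s) / 2 + (1 + β) * (h t - h s)
          + Real.sqrt ε * (1 + β) * (b t - b s) ≤ (1 + β) * (N + 2 * Real.sqrt ε * M) := by
        have e1 : 0 ≤ (1 + β) * (2 - ε * β) * (t - s) :=
          mul_nonneg (mul_nonneg h1β.le (by linarith)) (by linarith [hs.2])
        have e2 : (1 + β) * (h t - h s) ≤ (1 + β) * N :=
          mul_le_mul_of_nonneg_left (hhd s t hs01 ht hs.2) h1β.le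
        have e3 : Real.sqrt ε * (1 + β) * (b t - b s)
            ≤ Real.sqrt ε * (1 + β) * (2 * M) := by
          apply mul_le_mul_of_nonneg_left _ (mul_nonneg hsε h1β.le)
          have h1 := hbM t ht
          have h2 := hbM s hs01
          have := abs_sub (b t) (b s)
          calc b t - b s ≤ |b t - b s| := le_abs_self _
            _ ≤ |b t| + |b s| := abs_sub _ _
            _ ≤ 2 * M := by linarith
        have : (1 + β) * (N + 2 * Real.sqrt ε * M)
            = (1 + β) * N + Real.sqrt ε * (1 + β) * (2 * M) := by ring
        rw [this]; linarith
      calc Real.exp (-(1 + β) * (2 - ε * β) * (t - s) / 2 + (1 + β) * (h t - h s)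
            + Real.sqrt ε * (1 + β) * (b t - b s)) * g s
          ≤ Real.exp ((1 + β) * (N + 2 * Real.sqrt ε * M)) * G := by
            apply mul_le_mul (Real.exp_le_exp.2 hexp) (hgG s hs01) (hg0 s hs01)
              (Real.exp_pos _).le
        _ = E ^ (1 + β) * G := by
            rw [hEdef, mul_comm (1 + β) (N + 2 * Real.sqrt ε * M), Real.exp_mul]
    have hKc : ContinuousOn (fun s => Real.exp (-(1 + β) * (2 - ε * β) * (t - s) / 2
        + (1 + β) * (h t - h s) + Real.sqrt ε * (1 + β) * (b t - b s)) * g s) (Icc (0:ℝ) t) := by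
      apply ContinuousOn.mul _ (hgc.mono hsub01)
      apply Real.continuous_exp.comp_continuousOn
      apply ContinuousOn.add
      apply ContinuousOn.add
      · exact (Continuous.continuousOn (by fun_prop))
      · exact continuousOn_const.mul (continuousOn_const.sub (hhc.mono hsub01))
      · exact continuousOn_const.mul (continuousOn_const.sub (hbc.mono hsub01))
    have hKint : IntervalIntegrable (fun s => Real.exp (-(1 + β) * (2 - ε * β) * (t - s) / 2
        + (1 + β) * (h t - h s) + Real.sqrt ε * (1 + β) * (b t - b s)) * g s) volume 0 t :=
      hKc.intervalIntegrable_of_Icc ht.1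
    have hIb : (∫ s in (0:ℝ)..t, Real.exp (-(1 + β) * (2 - ε * β) * (t - s) / 2
        + (1 + β) * (h t - h s) + Real.sqrt ε * (1 + β) * (b t - b s)) * g s)
        ≤ E ^ (1 + β) * G := by
      calc (∫ s in (0:ℝ)..t, Real.exp (-(1 + β) * (2 - ε * β) * (t - s) / 2
            + (1 + β) * (h t - h s) + Real.sqrt ε * (1 + β) * (b t - b s)) * g s)
          ≤ ∫ _ in (0:ℝ)..t, E ^ (1 + β) * G :=
            intervalIntegral.integral_mono_on ht.1 hKint intervalIntegrable_const hKle
        _ = t * (E ^ (1 + β) * G) := by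
            rw [intervalIntegral.integral_const, smul_eq_mul, sub_zero]
        _ ≤ 1 * (E ^ (1 + β) * G) := by
            apply mul_le_mul_of_nonneg_right ht.2
            exact mul_nonneg (Real.rpow_nonneg hEpos.le _) hG0
        _ = E ^ (1 + β) * G := one_mul _
    -- combine
    have hsum : ξ t ^ (1 + β) ≤ A ^ (1 + β) + (1 + β) * (E ^ (1 + β) * G) := by
      rw [hξeq t ht]
      have := mul_le_mul_of_nonneg_left hIb h1β.le
      linarith
    have hB0 : 0 ≤ (1 + β) * (E ^ (1 + β) * G) := by positivity
    have hξt : ξ t = (ξ t ^ (1 + β)) ^ (1 / (1 + β)) := by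
      rw [← Real.rpow_mul (hξpos t ht).le, mul_one_div_cancel h1β.ne', Real.rpow_one]
    have hfac : ((1 + β) * (E ^ (1 + β) * G)) ^ (1 / (1 + β))
        = (1 + β) ^ (1 / (1 + β)) * (E * G ^ (1 / (1 + β))) := by
      rw [Real.mul_rpow h1β.le (mul_nonneg (Real.rpow_nonneg hEpos.le _) hG0),
        Real.mul_rpow (Real.rpow_nonneg hEpos.le _) hG0,
        ← Real.rpow_mul hEpos.le, mul_one_div_cancel h1β.ne', Real.rpow_one]
    have h2 : (1 + β) ^ (1 / (1 + β)) ≤ 1 + β := by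
      calc (1 + β) ^ (1 / (1 + β)) ≤ (1 + β) ^ (1:ℝ) :=
            Real.rpow_le_rpow_of_exponent_le (by linarith) hp1
        _ = 1 + β := Real.rpow_one _
    have h3 : 0 ≤ E * G ^ (1 / (1 + β)) := mul_nonneg hEpos.le (Real.rpow_nonneg hG0 _)
    calc ξ t = (ξ t ^ (1 + β)) ^ (1 / (1 + β)) := hξt
      _ ≤ (A ^ (1 + β) + (1 + β) * (E ^ (1 + β) * G)) ^ (1 / (1 + β)) :=
          Real.rpow_le_rpow (Real.rpow_nonneg (hξpos t ht).le _) hsum hp0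
      _ ≤ (A ^ (1 + β)) ^ (1 / (1 + β)) + ((1 + β) * (E ^ (1 + β) * G)) ^ (1 / (1 + β)) :=
          rpow_add_le_add_rpow' _ _ _ (Real.rpow_nonneg hApos.le _) hB0 hp0 hp1
      _ = A + (1 + β) ^ (1 / (1 + β)) * (E * G ^ (1 / (1 + β))) := by
          rw [← Real.rpow_mul hApos.le, mul_one_div_cancel h1β.ne', Real.rpow_one, hfac]
      _ ≤ A + (1 + β) * (E * G ^ (1 / (1 + β))) :=
          add_le_add le_rfl (mul_le_mul_of_nonneg_right h2 h3)
  -- conclude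
  apply csSup_le ((Set.nonempty_Icc.2 zero_le_one).image ξ)
  rintro x ⟨t, ht, rfl⟩
  have := hpt t ht
  nlinarith [mul_nonneg hβ.le hApos.le, hpt t ht]
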